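/- (Key inequality behind the KL exponent of separable sums.) Let m ≥ 1, θ ∈ (0,1), κ > 0, and let a_1,…,a_m and b_1,…,b_m be nonnegative reals such that b_i ≥ κ·a_i^θ for every i = 1,…,m. Then (∑_{i=1}^m b_i²)^{1/2} ≥ (κ / max{m^{θ−1/2}, 1})·(∑_{i=1}^m a_i)^θ. -/

import Mathlib

open Finset

lemma my_rpow_add_le_add_rpow {p : ℝ} (hp0 : 0 ≤ p) (hp1 : p ≤ 1) {x y : ℝ}
    (hx : 0 ≤ x) (hy : 0 ≤ y) : (x + y) ^ p ≤ x ^ p + y ^ p := by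
  lift x to NNReal using hx
  lift y to NNReal using hy
  have := NNReal.rpow_add_le_add_rpow x y hp0 hp1
  exact_mod_cast this

lemma my_sum_rpow {p : ℝ} (hp0 : 0 < p) (hp1 : p ≤ 1) {ι : Type*} [DecidableEq ι] (s : Finset ι)
    (f : ι → ℝ) (hf : ∀ i, 0 ≤ f i) :
    (∑ i ∈ s, f i) ^ p ≤ ∑ i ∈ s, f i ^ p := by
  induction s using Finset.induction_on with
  | empty => simp [Real.zero_rpow hp0.ne']
  | insert a s hnot ih =>
    rw [Finset.sum_insert hnot, Finset.sum_insert hnot]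
    calc (f a + ∑ i ∈ s, f i) ^ p ≤ f a ^ p + (∑ i ∈ s, f i) ^ p :=
          my_rpow_add_le_add_rpow hp0.le hp1 (hf a) (Finset.sum_nonneg fun i _ => hf i)
      _ ≤ f a ^ p + ∑ i ∈ s, f i ^ p := by linarith

/-- Key inequality behind the KL exponent of separable sums: if `b i ≥ κ (a i)^θ` for
nonnegative `a i, b i` and `θ ∈ (0,1)`, `κ > 0`, then
`√(∑ i, (b i)²) ≥ (κ / max (m^{θ−1/2}) 1) (∑ i, a i)^θ`. -/
theorem stmt10 (m : ℕ) (hm : 1 ≤ m) (θ κ : ℝ) (hθ0 : 0 < θ) (hθ1 : θ < 1) (hκ : 0 < κ)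
    (a b : Fin m → ℝ) (ha : ∀ i, 0 ≤ a i) (hb : ∀ i, 0 ≤ b i)
    (h : ∀ i, κ * (a i) ^ θ ≤ b i) :
    (κ / max ((m : ℝ) ^ (θ - 1 / 2)) 1) * (∑ i, a i) ^ θ ≤
      Real.sqrt (∑ i, (b i) ^ 2) := by
  set M : ℝ := max ((m : ℝ) ^ (θ - 1 / 2)) 1 with hMdef
  have hm1 : (1 : ℝ) ≤ (m : ℝ) := by exact_mod_cast hm
  have hM1 : (1 : ℝ) ≤ M := le_max_right _ _
  have hM0 : 0 < M := lt_of_lt_of_le one_pos hM1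
  set S : ℝ := ∑ i, a i with hSdef
  have hS0 : 0 ≤ S := Finset.sum_nonneg fun i _ => ha i
  have hSθ : 0 ≤ S ^ θ := Real.rpow_nonneg hS0 θ
  -- rewrite squares of rpow
  have hsq : ∀ i, (a i ^ θ) ^ 2 = a i ^ (θ * 2) := fun i => by
    rw [← Real.rpow_natCast (a i ^ θ) 2, ← Real.rpow_mul (ha i)]
    norm_num
  have hSsq : (S ^ θ) ^ 2 = S ^ (θ * 2) := by
    rw [← Real.rpow_natCast (S ^ θ) 2, ← Real.rpow_mul hS0]
    norm_num
  -- key claim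
  have key : S ^ (θ * 2) ≤ M ^ 2 * ∑ i, a i ^ (θ * 2) := by
    rcases le_or_gt θ (1 / 2) with hhalf | hhalf
    · have : S ^ (θ * 2) ≤ ∑ i, a i ^ (θ * 2) :=
        my_sum_rpow (by positivity) (by linarith) _ a ha
      have h1M : 1 ≤ M ^ 2 := one_le_pow₀ hM1
      have hnn : 0 ≤ ∑ i, a i ^ (θ * 2) :=
        Finset.sum_nonneg fun i _ => Real.rpow_nonneg (ha i) _
      nlinarith
    · have hMeq : M = (m : ℝ) ^ (θ - 1 / 2) :=
        max_eq_left (Real.one_le_rpow hm1 (by linarith))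
      have hM2 : M ^ 2 = (m : ℝ) ^ (θ * 2 - 1) := by
        rw [hMeq, ← Real.rpow_natCast ((m : ℝ) ^ (θ - 1/2)) 2,
          ← Real.rpow_mul (by positivity)]
        ring_nf
      have := Real.rpow_sum_le_const_mul_sum_rpow_of_nonneg (s := Finset.univ)
        (f := a) (p := θ * 2) (by linarith) (fun i _ => ha i)
      simpa [hM2, Finset.card_univ] using this
  -- sum of b squares dominates
  have hbsum : ∑ i, (κ * a i ^ θ) ^ 2 ≤ ∑ i, (b i) ^ 2 := by
    refine Finset.sum_le_sum fun i _ => ?_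
    have h1 : 0 ≤ κ * a i ^ θ := mul_nonneg hκ.le (Real.rpow_nonneg (ha i) θ)
    exact pow_le_pow_left₀ h1 (h i) 2
  rw [show (∑ i, (b i)^2) = Real.sqrt (∑ i, (b i)^2) ^ 2 from
    (Real.sq_sqrt (Finset.sum_nonneg fun i _ => sq_nonneg _)).symm] at hbsum
  have hsqrt : 0 ≤ Real.sqrt (∑ i, (b i) ^ 2) := Real.sqrt_nonneg _
  -- reduce to squares
  have hL0 : 0 ≤ κ / M * S ^ θ := by positivity
  refine le_of_sq_le_sq ?_ hsqrt
  calc (κ / M * S ^ θ) ^ 2 = κ ^ 2 / M ^ 2 * S ^ (θ * 2) := by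
        rw [← hSsq]; ring
    _ ≤ κ ^ 2 / M ^ 2 * (M ^ 2 * ∑ i, a i ^ (θ * 2)) := by
        apply mul_le_mul_of_nonneg_left key (by positivity)
    _ = κ ^ 2 * ∑ i, a i ^ (θ * 2) := by
        field_simp
    _ = ∑ i, (κ * a i ^ θ) ^ 2 := by
        rw [Finset.mul_sum]
        exact Finset.sum_congr rfl fun i _ => by rw [mul_pow, hsq i]
    _ ≤ Real.sqrt (∑ i, (b i) ^ 2) ^ 2 := hbsum
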